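/- Pointwise convergence to Q: fix κ > 0 and z ∈ ℂ. With M → ∞, K = κ/√M, A = 1+K, and φ = 1 + z/M, one has K^{-3} F₀(1 + z/M) → Q(z; κ) = e^z(1 + z²/κ²) - (1 + z). -/

import Mathlib

set_option maxHeartbeats 1000000

open Filter Complex

lemma my_exp_lim (z : ℂ) :
    Tendsto (fun n : ℕ => (1 + z / (n : ℂ)) ^ n) atTop (nhds (Complex.exp z)) := by
  have hd : HasDerivAt (fun w : ℂ => Complex.log (1 + z * w)) z 0 := by
    have h1 : HasDerivAt (fun w : ℂ => 1 + z * w) z 0 := by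
      simpa using ((hasDerivAt_id (0:ℂ)).const_mul z).const_add 1
    have h2 : (1 : ℂ) + z * 0 ∈ Complex.slitPlane := by
      simp [Complex.mem_slitPlane_iff]
    simpa using h1.clog h2
  have hslope := hasDerivAt_iff_tendsto_slope.mp hd
  have hinv0 : Tendsto (fun n : ℕ => ((n : ℂ))⁻¹) atTop (nhds 0) := by
    have := (tendsto_natCast_atTop_atTop (R := ℝ)).inv_tendsto_atTop
    have h2 : Tendsto (fun n : ℕ => (((n:ℝ)⁻¹ : ℝ) : ℂ)) atTop (nhds ((0:ℝ):ℂ)) :=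
      (Complex.continuous_ofReal.tendsto 0).comp this
    simpa using h2.congr fun n => by push_cast; ring
  have hinv : Tendsto (fun n : ℕ => ((n : ℂ))⁻¹) atTop (nhdsWithin 0 {(0:ℂ)}ᶜ) := by
    apply tendsto_nhdsWithin_of_tendsto_nhds_of_eventually_within _ hinv0
    filter_upwards [eventually_ge_atTop 1] with m hm
    simp [Nat.cast_ne_zero, Nat.one_le_iff_ne_zero.mp hm]
  have hcomp := hslope.comp hinv
  have hlog : Tendsto (fun n : ℕ => (n : ℂ) * Complex.log (1 + z / n)) atTop (nhds z) := by
    apply hcomp.congr'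
    filter_upwards [eventually_ge_atTop 1] with m hm
    have hm0 : (m : ℂ) ≠ 0 := Nat.cast_ne_zero.mpr (Nat.one_le_iff_ne_zero.mp hm)
    simp only [Function.comp, slope_def_field]
    rw [div_eq_mul_inv z (m:ℂ)]
    field_simp
    simp [Complex.log_one]
  have hexp := (Complex.continuous_exp.tendsto z).comp hlog
  apply hexp.congr'
  have hz : ∀ᶠ n : ℕ in atTop, ‖z / (n:ℂ)‖ < 1 := by
    have h3 : Tendsto (fun n : ℕ => z / (n:ℂ)) atTop (nhds 0) := by
      simpa [div_eq_mul_inv] using hinv0.const_mul z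
    have hnorm : Tendsto (fun n : ℕ => ‖z / (n:ℂ)‖) atTop (nhds 0) := by
      simpa using h3.norm
    have := hnorm.eventually_lt_const (by norm_num : (0:ℝ) < 1)
    simpa using this
  filter_upwards [hz] with m hm
  have hne : (1 : ℂ) + z / m ≠ 0 := by
    intro h
    have : z / (m:ℂ) = -1 := by linear_combination h
    rw [this] at hm; simp at hm
  simp only [Function.comp]
  rw [show ((m:ℂ) * Complex.log (1 + z / m)) = (m:ℕ) • Complex.log (1 + z / m) by simp,
    Complex.exp_nsmul, Complex.exp_log hne]

noncomputable def myG (k z s : ℂ) : ℂ :=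
  (k^3 + z^2*k + s*(3*z*k^2 - z^2 + 2*z^2*k^2 + z^3)
    + s^2*(4*z*k^3 + z^2*k + z^2*k^3 + 3*z^3*k)
    + s^3*(8*z^2*k^2 + z^3 + 3*z^3*k^2)
    + s^4*(6*z^2*k^3 + 6*z^3*k + z^3*k^3)
    + s^5*(9*z^3*k^2 + z^4)
    + s^6*(4*z^3*k^3 + 3*z^4*k)
    + s^7*(3*z^4*k^2) + s^8*(z^4*k^3)) / k^3

noncomputable def myH (k z s : ℂ) : ℂ :=
  (k^3 + z*k^3 + s*(3*z*k^2 + 3*z^2*k^2)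
    + s^2*(4*z*k^3 + 3*z^2*k + 3*z^2*k^3 + 2*z^3*k)
    + s^3*(9*z^2*k^2 + 2*z^3 + 5*z^3*k^2)
    + s^4*(6*z^2*k^3 + 7*z^3*k + 3*z^3*k^3 + z^4*k)
    + s^5*(9*z^3*k^2 + z^4 + 2*z^4*k^2)
    + s^6*(4*z^3*k^3 + 3*z^4*k + z^4*k^3)
    + s^7*(3*z^4*k^2) + s^8*(z^4*k^3)) / k^3

lemma myG_continuous (k z : ℂ) : Continuous (myG k z) := by
  unfold myG; fun_prop

lemma myH_continuous (k z : ℂ) : Continuous (myH k z) := by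
  unfold myH; fun_prop

/-- Pointwise convergence `K⁻³ F₀(1 + z/M) → Q(z;κ)` as `M → ∞` with `K = κ/√M`. -/
theorem F0_converges_to_Q (κ : ℝ) (hκ : 0 < κ) (z : ℂ) :
    Filter.Tendsto
      (fun M : ℕ =>
        (((κ / Real.sqrt M : ℝ) : ℂ) ^ 3)⁻¹ *
          ((1 + z / (M : ℂ)) ^ M *
              ((1 + z / (M : ℂ)) * ((((κ / Real.sqrt M : ℝ) : ℂ) + 1) * (1 + z / (M : ℂ)) - 1) ^ 3
                - (((κ / Real.sqrt M : ℝ) : ℂ) + 1) ^ 2 * ((1 + z / (M : ℂ)) - 1) ^ 2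
                + (M : ℂ) * ((((κ / Real.sqrt M : ℝ) : ℂ) + 1) * (1 + z / (M : ℂ)) - 1)
                    * (((κ / Real.sqrt M : ℝ) : ℂ) + 1) ^ 2 * ((1 + z / (M : ℂ)) - 1) ^ 2)
            - (((κ / Real.sqrt M : ℝ) : ℂ) *
                  (((((κ / Real.sqrt M : ℝ) : ℂ) + 1) * (1 + z / (M : ℂ)) - 1) ^ 2
                      * (1 + z / (M : ℂ)) ^ 2
                    - ((1 + z / (M : ℂ)) - 1) ^ 2)
                + (((κ / Real.sqrt M : ℝ) : ℂ) * (M : ℂ) + 1) * ((1 + z / (M : ℂ)) - 1)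
                    * ((((κ / Real.sqrt M : ℝ) : ℂ) + 1) * (1 + z / (M : ℂ)) - 1)
                    * ((((κ / Real.sqrt M : ℝ) : ℂ) + 1) * (1 + z / (M : ℂ)) ^ 2 - 1))))
      Filter.atTop
      (nhds (Complex.exp z * (1 + z ^ 2 / (κ : ℂ) ^ 2) - (1 + z))) := by
  have hk0 : ((κ : ℂ)) ≠ 0 := Complex.ofReal_ne_zero.mpr hκ.ne'
  have hs : Tendsto (fun n : ℕ => ((((Real.sqrt n)⁻¹ : ℝ)) : ℂ)) atTop (nhds 0) := by
    have hsq : Tendsto Real.sqrt atTop atTop := by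
      apply tendsto_atTop_atTop.mpr
      intro b
      refine ⟨b ^ 2, fun x hx => ?_⟩
      calc b ≤ |b| := le_abs_self b
        _ = Real.sqrt (b ^ 2) := (Real.sqrt_sq_eq_abs b).symm
        _ ≤ Real.sqrt x := Real.sqrt_le_sqrt hx
    have h1 : Tendsto (fun n : ℕ => (Real.sqrt n)⁻¹) atTop (nhds 0) :=
      (hsq.comp (tendsto_natCast_atTop_atTop (R := ℝ))).inv_tendsto_atTop
    have h2 : Tendsto (fun n : ℕ => ((((Real.sqrt n)⁻¹ : ℝ)) : ℂ)) atTop (nhds ((0:ℝ):ℂ)) :=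
      (Complex.continuous_ofReal.tendsto 0).comp h1
    simpa using h2
  have hE := my_exp_lim z
  have hlim : Tendsto
      (fun n : ℕ => (1 + z / (n : ℂ)) ^ n * myG (κ:ℂ) z (((Real.sqrt n)⁻¹ : ℝ) : ℂ)
        - myH (κ:ℂ) z (((Real.sqrt n)⁻¹ : ℝ) : ℂ)) atTop
      (nhds (Complex.exp z * myG (κ:ℂ) z 0 - myH (κ:ℂ) z 0)) :=
    (hE.mul (((myG_continuous (κ:ℂ) z).tendsto 0).comp hs)).sub
      (((myH_continuous (κ:ℂ) z).tendsto 0).comp hs)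
  have hval : Complex.exp z * myG (κ:ℂ) z 0 - myH (κ:ℂ) z 0
      = Complex.exp z * (1 + z ^ 2 / (κ : ℂ) ^ 2) - (1 + z) := by
    unfold myG myH
    field_simp
    ring
  rw [hval] at hlim
  apply hlim.congr'
  filter_upwards [eventually_ge_atTop 1] with n hn
  have hn0 : (0:ℝ) < Real.sqrt n :=
    Real.sqrt_pos.mpr (by exact_mod_cast Nat.pos_of_ne_zero (Nat.one_le_iff_ne_zero.mp hn))
  set s : ℂ := ((((Real.sqrt n)⁻¹ : ℝ)) : ℂ) with hsdef
  have hs0 : s ≠ 0 := Complex.ofReal_ne_zero.mpr (inv_ne_zero hn0.ne')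
  have hNs : (n : ℂ) = (s ^ 2)⁻¹ := by
    rw [hsdef]
    push_cast
    rw [inv_pow, inv_inv, ← Complex.ofReal_pow, Real.sq_sqrt (Nat.cast_nonneg n)]
    norm_cast
  have hK : ((κ / Real.sqrt n : ℝ) : ℂ) = (κ : ℂ) * s := by
    rw [hsdef]; push_cast; rw [div_eq_mul_inv]
  rw [hK, hNs]
  unfold myG myH
  generalize (1 + z / (s^2)⁻¹) ^ n = E
  field_simp
  ring
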